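/- Data processing inequality for H_H^ε: if E: A → A' is a sub-unital trace-preserving completely positive map and F: B → B' is a trace-preserving completely positive map, then for τ = (E⊗F)(ρ_AB), H_H^ε(A|B)_ρ ≤ H_H^ε(A'|B')_τ. -/

import Mathlib

open Matrix Kronecker
open scoped ComplexOrder

/-- Hypothesis testing quantity `β_ε(ρ‖σ) = (1/ε) min{Tr(Qσ) : 0 ≤ Q ≤ I, Tr(Qρ) ≥ ε}`. -/
noncomputable def betaHT {ι : Type*} [Fintype ι] [DecidableEq ι]
    (ε : ℝ) (ρ σ : Matrix ι ι ℂ) : ℝ :=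
  sInf { r : ℝ | ∃ Q : Matrix ι ι ℂ, Q.PosSemidef ∧ ((1 : Matrix ι ι ℂ) - Q).PosSemidef ∧
    ε ≤ ((Q * ρ).trace).re ∧ r = ((Q * σ).trace).re / ε }

/-- Hypothesis testing relative entropy `D_H^ε(ρ‖σ) = -log₂ β_ε(ρ‖σ)`. -/
noncomputable def DH {ι : Type*} [Fintype ι] [DecidableEq ι]
    (ε : ℝ) (ρ σ : Matrix ι ι ℂ) : ℝ :=
  - Real.logb 2 (betaHT ε ρ σ)

/-- Partial trace over the first (A) factor. -/
noncomputable def ptraceA {α β : Type*} [Fintype α]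
    (ρ : Matrix (α × β) (α × β) ℂ) : Matrix β β ℂ :=
  fun b b' => ∑ a, ρ (a, b) (a, b')

/-- Conditional hypothesis testing entropy `H_H^ε(A|B)_ρ = -D_H^ε(ρ_AB ‖ I_A ⊗ ρ_B)`. -/
noncomputable def HH {α β : Type*} [Fintype α] [Fintype β] [DecidableEq α] [DecidableEq β]
    (ε : ℝ) (ρ : Matrix (α × β) (α × β) ℂ) : ℝ :=
  Real.logb 2 (betaHT ε ρ ((1 : Matrix α α ℂ) ⊗ₖ ptraceA ρ))


section DPIHelpers

open Complex

noncomputable def betaSet {ι : Type*} [Fintype ι] [DecidableEq ι]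
    (ε : ℝ) (ρ σ : Matrix ι ι ℂ) : Set ℝ :=
  { r : ℝ | ∃ Q : Matrix ι ι ℂ, Q.PosSemidef ∧ ((1 : Matrix ι ι ℂ) - Q).PosSemidef ∧
    ε ≤ ((Q * ρ).trace).re ∧ r = ((Q * σ).trace).re / ε }

variable {l m n p : Type*}

lemma kron_conjT (A : Matrix l m ℂ) (B : Matrix n p ℂ) : (A ⊗ₖ B)ᴴ = Aᴴ ⊗ₖ Bᴴ := by
  ext ⟨i,j⟩ ⟨k,l'⟩
  simp [Matrix.conjTranspose_apply, Matrix.kroneckerMap_apply, star_mul']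

lemma psd_eq_conj {ι : Type*} [Fintype ι] [DecidableEq ι] {M : Matrix ι ι ℂ}
    (h : M.PosSemidef) : ∃ C : Matrix ι ι ℂ, M = Cᴴ * C := by
  open scoped MatrixOrder in
  obtain ⟨B, rfl⟩ := CStarAlgebra.nonneg_iff_eq_star_mul_self.mp h.nonneg
  exact ⟨B, rfl⟩

lemma kron_posSemidef {α β : Type*} [Fintype α] [DecidableEq α] [Fintype β] [DecidableEq β]
    {A : Matrix α α ℂ} {B : Matrix β β ℂ} (hA : A.PosSemidef) (hB : B.PosSemidef) :
    (A ⊗ₖ B).PosSemidef := by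
  obtain ⟨C, rfl⟩ := psd_eq_conj hA
  obtain ⟨D, rfl⟩ := psd_eq_conj hB
  rw [Matrix.mul_kronecker_mul, ← kron_conjT]
  exact Matrix.posSemidef_conjTranspose_mul_self _

lemma psd_trace_re_nonneg {ι : Type*} [Fintype ι] [DecidableEq ι] {M : Matrix ι ι ℂ}
    (h : M.PosSemidef) : 0 ≤ M.trace.re := by
  have hdiag : ∀ i, 0 ≤ (M i i).re := by
    intro i
    have := h.diag_nonneg (i := i)
    exact (Complex.nonneg_iff.mp this).1
  rw [Matrix.trace, Complex.re_sum]
  exact Finset.sum_nonneg fun i _ => hdiag i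

lemma trace_mul_psd_re_nonneg {ι : Type*} [Fintype ι] [DecidableEq ι] {A B : Matrix ι ι ℂ}
    (hA : A.PosSemidef) (hB : B.PosSemidef) : 0 ≤ ((A * B).trace).re := by
  obtain ⟨C, rfl⟩ := psd_eq_conj hB
  have : (A * (Cᴴ * C)).trace = (C * A * Cᴴ).trace := by
    rw [← Matrix.mul_assoc, Matrix.trace_mul_comm, ← Matrix.mul_assoc]
  rw [this]
  exact psd_trace_re_nonneg (hA.mul_mul_conjTranspose_same C)

lemma psd_sum {ι n : Type*} [Fintype n] (s : Finset ι) (f : ι → Matrix n n ℂ)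
    (h : ∀ i ∈ s, (f i).PosSemidef) : (∑ i ∈ s, f i).PosSemidef :=
  Finset.sum_induction f _ (fun _ _ ha hb => ha.add hb) Matrix.PosSemidef.zero h

lemma sum_kron {ι : Type*} (s : Finset ι) (A : ι → Matrix l m ℂ) (B : Matrix n p ℂ) :
    (∑ i ∈ s, A i) ⊗ₖ B = ∑ i ∈ s, A i ⊗ₖ B := by
  ext ⟨i,j⟩ ⟨k,l'⟩
  simp [Matrix.kroneckerMap_apply, Matrix.sum_apply, Finset.sum_mul]

lemma kron_sum {ι : Type*} (s : Finset ι) (A : Matrix l m ℂ) (B : ι → Matrix n p ℂ) :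
    A ⊗ₖ (∑ i ∈ s, B i) = ∑ i ∈ s, A ⊗ₖ B i := by
  ext ⟨i,j⟩ ⟨k,l'⟩
  simp [Matrix.kroneckerMap_apply, Matrix.sum_apply, Finset.mul_sum]

lemma sub_kron (A B : Matrix l m ℂ) (C : Matrix n p ℂ) :
    (A - B) ⊗ₖ C = A ⊗ₖ C - B ⊗ₖ C := by
  ext ⟨i,j⟩ ⟨k,l'⟩
  simp [Matrix.kroneckerMap_apply, sub_mul]

lemma ptraceA_sum {ι α β : Type*} [Fintype α] [Fintype β] (s : Finset ι)
    (f : ι → Matrix (α × β) (α × β) ℂ) :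
    ptraceA (∑ i ∈ s, f i) = ∑ i ∈ s, ptraceA (f i) := by
  ext b b'
  simp only [ptraceA, Matrix.sum_apply]
  exact Finset.sum_comm

noncomputable def Jmat (α β : Type*) [DecidableEq α] [DecidableEq β] (a : α) :
    Matrix (α × β) β ℂ :=
  fun p b => if p = (a, b) then 1 else 0

lemma ptraceA_eq_sum_conj {α β : Type*} [Fintype α] [Fintype β] [DecidableEq α] [DecidableEq β]
    (X : Matrix (α × β) (α × β) ℂ) :
    ptraceA X = ∑ a : α, (Jmat α β a)ᴴ * X * (Jmat α β a) := by
  ext b b'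
  simp [ptraceA, Matrix.sum_apply, Matrix.mul_apply, Jmat, Matrix.conjTranspose_apply,
    apply_ite (starRingEnd ℂ), Fintype.sum_prod_type, Prod.mk.injEq, ite_and]

lemma ptraceA_posSemidef {α β : Type*} [Fintype α] [Fintype β] [DecidableEq α] [DecidableEq β]
    {ρ : Matrix (α × β) (α × β) ℂ} (h : ρ.PosSemidef) : (ptraceA ρ).PosSemidef := by
  rw [ptraceA_eq_sum_conj]
  exact Finset.sum_induction _ _ (fun _ _ ha hb => ha.add hb) Matrix.PosSemidef.zero
    (fun a _ => h.conjTranspose_mul_mul_same _)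

lemma ptraceA_one_kron_mul {α β β' : Type*} [Fintype α] [DecidableEq α] [Fintype β] [Fintype β']
    (M : Matrix β' β ℂ) (N : Matrix β β' ℂ) (X : Matrix (α × β) (α × β) ℂ) :
    ptraceA (((1 : Matrix α α ℂ) ⊗ₖ M) * X * ((1 : Matrix α α ℂ) ⊗ₖ N)) =
      M * ptraceA X * N := by
  ext b b'
  simp only [ptraceA, Matrix.mul_apply, Matrix.kroneckerMap_apply, Matrix.one_apply,
    Fintype.sum_prod_type, ite_mul, mul_ite, one_mul, zero_mul, mul_zero, mul_one,
    Finset.sum_ite_irrel, Finset.sum_const_zero,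
    Finset.sum_ite_eq, Finset.sum_ite_eq', Finset.mem_univ, if_true,
    Finset.sum_mul, Finset.mul_sum]
  rw [Finset.sum_comm]
  exact Finset.sum_congr rfl fun x1 _ => Finset.sum_comm

lemma ptraceA_kraus_sum {α α' β : Type*} [Fintype α] [Fintype α'] [DecidableEq α]
    [DecidableEq α'] [Fintype β] [DecidableEq β] {r : ℕ} (K : Fin r → Matrix α' α ℂ)
    (hKTP : ∑ i, (K i)ᴴ * K i = 1) (Z : Matrix (α × β) (α × β) ℂ) :
    ∑ i, ptraceA ((K i ⊗ₖ (1 : Matrix β β ℂ)) * Z * ((K i)ᴴ ⊗ₖ (1 : Matrix β β ℂ))) = ptraceA Z := by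
  have h1 : ∀ a1 a2 : α, (∑ i, ∑ a, (starRingEnd ℂ) (K i a a2) * K i a a1) =
      if a2 = a1 then 1 else 0 := by
    intro a1 a2
    have := congrFun (congrFun hKTP a2) a1
    simpa [Matrix.sum_apply, Matrix.mul_apply, Matrix.conjTranspose_apply,
      Matrix.one_apply] using this
  ext b b'
  simp only [Matrix.sum_apply, ptraceA, Matrix.mul_apply, Matrix.kroneckerMap_apply,
    Matrix.one_apply, Matrix.conjTranspose_apply, Fintype.sum_prod_type, ite_mul, mul_ite,
    one_mul, zero_mul, mul_zero, mul_one, Finset.sum_ite_irrel, Finset.sum_const_zero,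
    Finset.sum_ite_eq, Finset.sum_ite_eq', Finset.mem_univ, if_true,
    Finset.sum_mul, Finset.mul_sum]
  have step : ∀ g : Fin r → α' → α → α → ℂ,
      (∑ i : Fin r, ∑ a : α', ∑ c : α, ∑ d : α, g i a c d) =
        ∑ c : α, ∑ d : α, ∑ i : Fin r, ∑ a : α', g i a c d := by
    intro g
    calc (∑ i : Fin r, ∑ a : α', ∑ c : α, ∑ d : α, g i a c d)
        = ∑ i : Fin r, ∑ c : α, ∑ a : α', ∑ d : α, g i a c d :=
          Finset.sum_congr rfl fun i _ => Finset.sum_comm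
      _ = ∑ c : α, ∑ i : Fin r, ∑ a : α', ∑ d : α, g i a c d := Finset.sum_comm
      _ = ∑ c : α, ∑ i : Fin r, ∑ d : α, ∑ a : α', g i a c d :=
          Finset.sum_congr rfl fun c _ => Finset.sum_congr rfl fun i _ => Finset.sum_comm
      _ = ∑ c : α, ∑ d : α, ∑ i : Fin r, ∑ a : α', g i a c d :=
          Finset.sum_congr rfl fun c _ => Finset.sum_comm
  rw [step]
  have : ∀ c d : α, (∑ i : Fin r, ∑ a : α', K i a d * Z (d, b) (c, b') * star (K i a c)) =
      (if c = d then 1 else 0) * Z (d, b) (c, b') := by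
    intro c d
    rw [← h1 d c, Finset.sum_mul]
    refine Finset.sum_congr rfl fun i _ => ?_
    rw [Finset.sum_mul]
    refine Finset.sum_congr rfl fun a _ => ?_
    rw [starRingEnd_apply]
    ring
  simp only [this, ite_mul, one_mul, zero_mul, Finset.sum_ite_eq, Finset.mem_univ, if_true]

lemma form_re_eq {ι : Type*} [Fintype ι] (C : Matrix ι ι ℂ) (v : ι → ℂ) :
    (star v ⬝ᵥ (Cᴴ * C) *ᵥ v).re = ∑ k, Complex.normSq ((C *ᵥ v) k) := by
  rw [← Matrix.mulVec_mulVec, Matrix.dotProduct_mulVec, ← Matrix.star_mulVec,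
    dotProduct]
  rw [Complex.re_sum]
  refine Finset.sum_congr rfl fun k _ => ?_
  rw [Pi.star_apply, ← starRingEnd_apply, ← Complex.normSq_eq_conj_mul_self]
  exact Complex.ofReal_re _

lemma sigma_form_decomp {α β : Type*} [Fintype α] [Fintype β] [DecidableEq α] [DecidableEq β]
    (ρ : Matrix (α × β) (α × β) ℂ) (x : α × β → ℂ) :
    star x ⬝ᵥ ((1 : Matrix α α ℂ) ⊗ₖ ptraceA ρ) *ᵥ x =
      ∑ a : α, ∑ c : α,
        star (fun p : α × β => if p.1 = c then x (a, p.2) else 0) ⬝ᵥ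
          ρ *ᵥ (fun p : α × β => if p.1 = c then x (a, p.2) else 0) := by
  simp only [dotProduct, Matrix.mulVec, Matrix.kroneckerMap_apply, Matrix.one_apply,
    ptraceA, Pi.star_apply, Fintype.sum_prod_type, ite_mul, mul_ite, one_mul, zero_mul,
    mul_zero, mul_one, apply_ite star, star_zero, Finset.sum_ite_irrel, Finset.sum_const_zero,
    Finset.sum_ite_eq, Finset.sum_ite_eq', Finset.mem_univ, if_true,
    Finset.sum_mul, Finset.mul_sum]
  refine Finset.sum_congr rfl fun a _ => ?_
  have step : ∀ g : β → β → α → ℂ,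
      (∑ b1 : β, ∑ b2 : β, ∑ c : α, g b1 b2 c) = ∑ c : α, ∑ b1 : β, ∑ b2 : β, g b1 b2 c := by
    intro g
    calc (∑ b1 : β, ∑ b2 : β, ∑ c : α, g b1 b2 c)
        = ∑ b1 : β, ∑ c : α, ∑ b2 : β, g b1 b2 c :=
          Finset.sum_congr rfl fun b1 _ => Finset.sum_comm
      _ = ∑ c : α, ∑ b1 : β, ∑ b2 : β, g b1 b2 c := Finset.sum_comm
  exact step _

lemma quad_CS {α β : Type*} [Fintype α] [Fintype β] [DecidableEq α] [DecidableEq β]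
    {ρ : Matrix (α × β) (α × β) ℂ} (hρ : ρ.PosSemidef) (x : α × β → ℂ) :
    (star x ⬝ᵥ ρ *ᵥ x).re ≤
      (Fintype.card α : ℝ) * (star x ⬝ᵥ ((1 : Matrix α α ℂ) ⊗ₖ ptraceA ρ) *ᵥ x).re := by
  classical
  obtain ⟨C, hC⟩ := psd_eq_conj hρ
  set u : α → α → (α × β) → ℂ := fun a c p => if p.1 = c then x (a, p.2) else 0 with hu
  have hform : ∀ v, (star v ⬝ᵥ ρ *ᵥ v).re = ∑ k, Complex.normSq ((C *ᵥ v) k) := fun v => by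
    rw [hC]; exact form_re_eq C v
  have hxk : ∀ k, (C *ᵥ x) k = ∑ a, (C *ᵥ u a a) k := by
    intro k
    simp only [Matrix.mulVec, dotProduct, hu]
    rw [Finset.sum_comm]
    refine Finset.sum_congr rfl fun p _ => ?_
    simp [mul_ite, mul_zero, Finset.sum_ite_eq]
  have hCS : ∀ k, Complex.normSq ((C *ᵥ x) k) ≤
      (Fintype.card α : ℝ) * ∑ a, Complex.normSq ((C *ᵥ u a a) k) := by
    intro k
    rw [hxk k]
    calc Complex.normSq (∑ a, (C *ᵥ u a a) k)
        = ‖∑ a, (C *ᵥ u a a) k‖ ^ 2 := (Complex.sq_norm _).symm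
      _ ≤ (∑ a, ‖(C *ᵥ u a a) k‖) ^ 2 := by
          refine pow_le_pow_left₀ (norm_nonneg _) ?_ 2
          exact norm_sum_le _ _
      _ ≤ (Finset.univ : Finset α).card * ∑ a, ‖(C *ᵥ u a a) k‖ ^ 2 :=
          sq_sum_le_card_mul_sum_sq
      _ = (Fintype.card α : ℝ) * ∑ a, Complex.normSq ((C *ᵥ u a a) k) := by
          simp [Complex.sq_norm, Finset.card_univ]
  have h2 : (star x ⬝ᵥ ρ *ᵥ x).re ≤
      (Fintype.card α : ℝ) * ∑ a, (star (u a a) ⬝ᵥ ρ *ᵥ (u a a)).re := by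
    rw [hform]
    calc ∑ k, Complex.normSq ((C *ᵥ x) k)
        ≤ ∑ k, (Fintype.card α : ℝ) * ∑ a, Complex.normSq ((C *ᵥ u a a) k) :=
          Finset.sum_le_sum fun k _ => hCS k
      _ = (Fintype.card α : ℝ) * ∑ a, ∑ k, Complex.normSq ((C *ᵥ u a a) k) := by
          rw [← Finset.mul_sum]
          congr 1
          exact Finset.sum_comm
      _ = (Fintype.card α : ℝ) * ∑ a, (star (u a a) ⬝ᵥ ρ *ᵥ (u a a)).re := by
          congr 1
          exact Finset.sum_congr rfl fun a _ => (hform (u a a)).symm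
  have h3 : ∑ a, (star (u a a) ⬝ᵥ ρ *ᵥ (u a a)).re ≤
      (star x ⬝ᵥ ((1 : Matrix α α ℂ) ⊗ₖ ptraceA ρ) *ᵥ x).re := by
    rw [sigma_form_decomp ρ x, Complex.re_sum]
    refine Finset.sum_le_sum fun a _ => ?_
    rw [Complex.re_sum]
    exact Finset.single_le_sum (fun c _ => hρ.re_dotProduct_nonneg _) (Finset.mem_univ a)
  calc (star x ⬝ᵥ ρ *ᵥ x).re
      ≤ (Fintype.card α : ℝ) * ∑ a, (star (u a a) ⬝ᵥ ρ *ᵥ (u a a)).re := h2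
    _ ≤ (Fintype.card α : ℝ) * (star x ⬝ᵥ ((1 : Matrix α α ℂ) ⊗ₖ ptraceA ρ) *ᵥ x).re :=
        mul_le_mul_of_nonneg_left h3 (Nat.cast_nonneg _)

lemma smul_sigma_sub_posSemidef {α β : Type*} [Fintype α] [Fintype β] [DecidableEq α]
    [DecidableEq β] {ρ : Matrix (α × β) (α × β) ℂ} (hρ : ρ.PosSemidef) :
    ((Fintype.card α : ℂ) • ((1 : Matrix α α ℂ) ⊗ₖ ptraceA ρ) - ρ).PosSemidef := by
  have hσpsd : ((1 : Matrix α α ℂ) ⊗ₖ ptraceA ρ).PosSemidef :=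
    kron_posSemidef Matrix.PosSemidef.one (ptraceA_posSemidef hρ)
  refine Matrix.PosSemidef.of_dotProduct_mulVec_nonneg ?_ ?_
  · refine Matrix.IsHermitian.sub ?_ hρ.1
    rw [Matrix.IsHermitian, Matrix.conjTranspose_smul, star_natCast, hσpsd.1]
  · intro x
    have hCS := quad_CS hρ x
    have hσ := hσpsd.dotProduct_mulVec_nonneg x
    have hρ2 := hρ.dotProduct_mulVec_nonneg x
    rw [Matrix.sub_mulVec, dotProduct_sub, Matrix.smul_mulVec,
      dotProduct_smul]
    rw [Complex.nonneg_iff] at hσ hρ2 ⊢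
    constructor
    · simp only [Complex.sub_re, Complex.smul_re, Complex.natCast_re]
      simp only [smul_eq_mul, Complex.mul_re, Complex.natCast_re, Complex.natCast_im,
        zero_mul, sub_zero, Complex.sub_re]
      linarith [hCS]
    · simp only [smul_eq_mul, Complex.sub_im, Complex.mul_im, Complex.natCast_re,
        Complex.natCast_im, zero_mul, add_zero]
      rw [← hσ.2, ← hρ2.2]
      ring

lemma trace_le_card_mul_sigma {α β : Type*} [Fintype α] [Fintype β] [DecidableEq α]
    [DecidableEq β] {ρ Q : Matrix (α × β) (α × β) ℂ} (hρ : ρ.PosSemidef) (hQ : Q.PosSemidef) :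
    ((Q * ρ).trace).re ≤
      (Fintype.card α : ℝ) * ((Q * ((1 : Matrix α α ℂ) ⊗ₖ ptraceA ρ)).trace).re := by
  have h0 := trace_mul_psd_re_nonneg hQ (smul_sigma_sub_posSemidef hρ)
  rw [Matrix.mul_sub, Matrix.trace_sub, Matrix.mul_smul, Matrix.trace_smul] at h0
  simp only [Complex.sub_re, smul_eq_mul, Complex.mul_re, Complex.natCast_re,
    Complex.natCast_im, zero_mul, sub_zero] at h0
  linarith

lemma trace_conj_cycle {n m : Type*} [Fintype n] [Fintype m] (M : Matrix m n ℂ)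
    (A : Matrix m m ℂ) (B : Matrix n n ℂ) :
    (Mᴴ * A * M * B).trace = (A * (M * B * Mᴴ)).trace := by
  calc (Mᴴ * A * M * B).trace = (B * (Mᴴ * A) * M).trace := by rw [Matrix.trace_mul_cycle]
    _ = (M * (B * (Mᴴ * A))).trace := Matrix.trace_mul_comm _ _
    _ = ((M * B * Mᴴ) * A).trace := by rw [← Matrix.mul_assoc, ← Matrix.mul_assoc,
          Matrix.mul_assoc (M * B) Mᴴ A]
    _ = (A * (M * B * Mᴴ)).trace := Matrix.trace_mul_comm _ _

end DPIHelpers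

/-- data processing inequality for H_H^ε: if E : A → A' is a sub-unital
trace-preserving CP map (Kraus operators K) and F : B → B' is a trace-preserving CP map
(Kraus operators L), then H_H^ε(A|B)_ρ ≤ H_H^ε(A'|B')_τ for τ = (E⊗F)(ρ). -/
theorem HH_data_processing {αA αA' αB αB' : Type*}
    [Fintype αA] [Fintype αA'] [Fintype αB] [Fintype αB']
    [DecidableEq αA] [DecidableEq αA'] [DecidableEq αB] [DecidableEq αB']
    {rA rB : ℕ}
    (ρ : Matrix (αA × αB) (αA × αB) ℂ) (hρ : ρ.PosSemidef) (hρ1 : ρ.trace = 1)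
    (K : Fin rA → Matrix αA' αA ℂ) (L : Fin rB → Matrix αB' αB ℂ)
    (hKTP : ∑ i, (K i)ᴴ * K i = 1)
    (hKsub : ((1 : Matrix αA' αA' ℂ) - ∑ i, K i * (K i)ᴴ).PosSemidef)
    (hLTP : ∑ j, (L j)ᴴ * L j = 1)
    (ε : ℝ) (hε0 : 0 < ε) (hε1 : ε ≤ 1) :
    HH ε ρ ≤ HH ε (∑ i : Fin rA, ∑ j : Fin rB,
      (K i ⊗ₖ L j) * ρ * (K i ⊗ₖ L j)ᴴ) := by
  classical
  -- abbreviations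
  have hρB : (ptraceA ρ).PosSemidef := ptraceA_posSemidef hρ
  have hτpsd : (∑ i : Fin rA, ∑ j : Fin rB,
      (K i ⊗ₖ L j) * ρ * (K i ⊗ₖ L j)ᴴ).PosSemidef :=
    psd_sum _ _ fun i _ => psd_sum _ _ fun j _ => hρ.mul_mul_conjTranspose_same _
  -- αA is nonempty
  have hAne : Nonempty αA := by
    by_contra h
    rw [not_nonempty_iff] at h
    apply one_ne_zero (α := ℂ)
    rw [← hρ1, Matrix.trace]
    simp
  have hcard : 0 < (Fintype.card αA : ℝ) := by
    exact_mod_cast Fintype.card_pos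
  -- the adjoint channel is unital
  have hsum1 : ∑ i : Fin rA, ∑ j : Fin rB, (K i ⊗ₖ L j)ᴴ * (K i ⊗ₖ L j) =
      (1 : Matrix (αA × αB) (αA × αB) ℂ) := by
    have hterm : ∀ (i : Fin rA) (j : Fin rB),
        (K i ⊗ₖ L j)ᴴ * (K i ⊗ₖ L j) = ((K i)ᴴ * K i) ⊗ₖ ((L j)ᴴ * L j) := by
      intro i j; rw [kron_conjT, ← Matrix.mul_kronecker_mul]
    calc ∑ i : Fin rA, ∑ j : Fin rB, (K i ⊗ₖ L j)ᴴ * (K i ⊗ₖ L j)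
        = ∑ i : Fin rA, ((K i)ᴴ * K i) ⊗ₖ (∑ j : Fin rB, (L j)ᴴ * L j) := by
          refine Finset.sum_congr rfl fun i _ => ?_
          rw [kron_sum]
          exact Finset.sum_congr rfl fun j _ => hterm i j
      _ = (∑ i : Fin rA, (K i)ᴴ * K i) ⊗ₖ (1 : Matrix αB αB ℂ) := by
          rw [hLTP, sum_kron]
      _ = 1 := by rw [hKTP, Matrix.one_kronecker_one]
  -- trace of τ is one
  have hcyc : ∀ (i : Fin rA) (j : Fin rB),
      ((K i ⊗ₖ L j) * ρ * (K i ⊗ₖ L j)ᴴ).trace =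
        ((K i ⊗ₖ L j)ᴴ * (K i ⊗ₖ L j) * ρ).trace := by
    intro i j
    have h := trace_conj_cycle (K i ⊗ₖ L j) 1 ρ
    rw [Matrix.mul_one, Matrix.one_mul] at h
    exact h.symm
  have hτ1 : (∑ i : Fin rA, ∑ j : Fin rB,
      (K i ⊗ₖ L j) * ρ * (K i ⊗ₖ L j)ᴴ).trace = 1 := by
    calc (∑ i : Fin rA, ∑ j : Fin rB, (K i ⊗ₖ L j) * ρ * (K i ⊗ₖ L j)ᴴ).trace
        = ∑ i : Fin rA, ∑ j : Fin rB, ((K i ⊗ₖ L j)ᴴ * (K i ⊗ₖ L j) * ρ).trace := by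
          rw [Matrix.trace_sum]
          refine Finset.sum_congr rfl fun i _ => ?_
          rw [Matrix.trace_sum]
          exact Finset.sum_congr rfl fun j _ => hcyc i j
      _ = ((∑ i : Fin rA, ∑ j : Fin rB, (K i ⊗ₖ L j)ᴴ * (K i ⊗ₖ L j)) * ρ).trace := by
          rw [Finset.sum_mul, Matrix.trace_sum]
          refine Finset.sum_congr rfl fun i _ => ?_
          rw [Finset.sum_mul, Matrix.trace_sum]
      _ = 1 := by rw [hsum1, Matrix.one_mul, hρ1]
  -- partial trace of τ
  have hrearr : ∀ (i : Fin rA) (j : Fin rB),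
      (K i ⊗ₖ L j) * ρ * (K i ⊗ₖ L j)ᴴ =
        (K i ⊗ₖ (1 : Matrix αB' αB' ℂ)) *
          (((1 : Matrix αA αA ℂ) ⊗ₖ L j) * ρ * ((1 : Matrix αA αA ℂ) ⊗ₖ (L j)ᴴ)) *
          ((K i)ᴴ ⊗ₖ (1 : Matrix αB' αB' ℂ)) := by
    intro i j
    rw [kron_conjT]
    rw [show (K i ⊗ₖ L j) =
        (K i ⊗ₖ (1 : Matrix αB' αB' ℂ)) * ((1 : Matrix αA αA ℂ) ⊗ₖ L j) by
      rw [← Matrix.mul_kronecker_mul, Matrix.mul_one, Matrix.one_mul]]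
    rw [show ((K i)ᴴ ⊗ₖ (L j)ᴴ) =
        ((1 : Matrix αA αA ℂ) ⊗ₖ (L j)ᴴ) * ((K i)ᴴ ⊗ₖ (1 : Matrix αB' αB' ℂ)) by
      rw [← Matrix.mul_kronecker_mul, Matrix.mul_one, Matrix.one_mul]]
    simp only [Matrix.mul_assoc]
  have hτB : ptraceA (∑ i : Fin rA, ∑ j : Fin rB, (K i ⊗ₖ L j) * ρ * (K i ⊗ₖ L j)ᴴ) =
      ∑ j : Fin rB, L j * ptraceA ρ * (L j)ᴴ := by
    calc ptraceA (∑ i : Fin rA, ∑ j : Fin rB, (K i ⊗ₖ L j) * ρ * (K i ⊗ₖ L j)ᴴ)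
        = ∑ i : Fin rA, ∑ j : Fin rB,
            ptraceA ((K i ⊗ₖ (1 : Matrix αB' αB' ℂ)) *
              (((1 : Matrix αA αA ℂ) ⊗ₖ L j) * ρ * ((1 : Matrix αA αA ℂ) ⊗ₖ (L j)ᴴ)) *
              ((K i)ᴴ ⊗ₖ (1 : Matrix αB' αB' ℂ))) := by
          rw [ptraceA_sum]
          refine Finset.sum_congr rfl fun i _ => ?_
          rw [ptraceA_sum]
          exact Finset.sum_congr rfl fun j _ => by rw [hrearr i j]
      _ = ∑ j : Fin rB, ∑ i : Fin rA,
            ptraceA ((K i ⊗ₖ (1 : Matrix αB' αB' ℂ)) *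
              (((1 : Matrix αA αA ℂ) ⊗ₖ L j) * ρ * ((1 : Matrix αA αA ℂ) ⊗ₖ (L j)ᴴ)) *
              ((K i)ᴴ ⊗ₖ (1 : Matrix αB' αB' ℂ))) := Finset.sum_comm
      _ = ∑ j : Fin rB,
            ptraceA (((1 : Matrix αA αA ℂ) ⊗ₖ L j) * ρ * ((1 : Matrix αA αA ℂ) ⊗ₖ (L j)ᴴ)) := by
          exact Finset.sum_congr rfl fun j _ => ptraceA_kraus_sum K hKTP _
      _ = ∑ j : Fin rB, L j * ptraceA ρ * (L j)ᴴ :=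
          Finset.sum_congr rfl fun j _ => ptraceA_one_kron_mul _ _ _
  -- reduce to a statement about infima
  show Real.logb 2 (sInf (betaSet ε ρ ((1 : Matrix αA αA ℂ) ⊗ₖ ptraceA ρ))) ≤
    Real.logb 2 (sInf (betaSet ε
      (∑ i : Fin rA, ∑ j : Fin rB, (K i ⊗ₖ L j) * ρ * (K i ⊗ₖ L j)ᴴ)
      ((1 : Matrix αA' αA' ℂ) ⊗ₖ ptraceA
        (∑ i : Fin rA, ∑ j : Fin rB, (K i ⊗ₖ L j) * ρ * (K i ⊗ₖ L j)ᴴ))))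
  have hSlb : ∀ r ∈ betaSet ε ρ ((1 : Matrix αA αA ℂ) ⊗ₖ ptraceA ρ),
      1 / (Fintype.card αA : ℝ) ≤ r := by
    rintro r ⟨Q, hQ, -, hQtr, rfl⟩
    have h1 := trace_le_card_mul_sigma hρ hQ
    have h3 : ε / (Fintype.card αA : ℝ) ≤
        ((Q * ((1 : Matrix αA αA ℂ) ⊗ₖ ptraceA ρ)).trace).re := by
      rw [div_le_iff₀ hcard, mul_comm]
      linarith
    calc 1 / (Fintype.card αA : ℝ) = (ε / (Fintype.card αA : ℝ)) / ε := by
          field_simp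
      _ ≤ ((Q * ((1 : Matrix αA αA ℂ) ⊗ₖ ptraceA ρ)).trace).re / ε := by gcongr
  have hSbdd : BddBelow (betaSet ε ρ ((1 : Matrix αA αA ℂ) ⊗ₖ ptraceA ρ)) :=
    ⟨1 / (Fintype.card αA : ℝ), fun r hr => hSlb r hr⟩
  have hSne : (betaSet ε ρ ((1 : Matrix αA αA ℂ) ⊗ₖ ptraceA ρ)).Nonempty := by
    refine ⟨(((1 : Matrix (αA × αB) (αA × αB) ℂ) *
        ((1 : Matrix αA αA ℂ) ⊗ₖ ptraceA ρ)).trace).re / ε, 1, Matrix.PosSemidef.one, ?_, ?_, rfl⟩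
    · rw [sub_self]; exact Matrix.PosSemidef.zero
    · rw [Matrix.one_mul, hρ1, Complex.one_re]; exact hε1
  have hTne : (betaSet ε
      (∑ i : Fin rA, ∑ j : Fin rB, (K i ⊗ₖ L j) * ρ * (K i ⊗ₖ L j)ᴴ)
      ((1 : Matrix αA' αA' ℂ) ⊗ₖ ptraceA
        (∑ i : Fin rA, ∑ j : Fin rB, (K i ⊗ₖ L j) * ρ * (K i ⊗ₖ L j)ᴴ))).Nonempty := by
    refine ⟨(((1 : Matrix (αA' × αB') (αA' × αB') ℂ) *
        ((1 : Matrix αA' αA' ℂ) ⊗ₖ ptraceA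
          (∑ i : Fin rA, ∑ j : Fin rB, (K i ⊗ₖ L j) * ρ * (K i ⊗ₖ L j)ᴴ))).trace).re / ε,
      1, Matrix.PosSemidef.one, ?_, ?_, rfl⟩
    · rw [sub_self]; exact Matrix.PosSemidef.zero
    · rw [Matrix.one_mul, hτ1, Complex.one_re]; exact hε1
  -- data processing: each feasible point for τ yields one for ρ with smaller value
  have hle : sInf (betaSet ε ρ ((1 : Matrix αA αA ℂ) ⊗ₖ ptraceA ρ)) ≤
      sInf (betaSet ε
        (∑ i : Fin rA, ∑ j : Fin rB, (K i ⊗ₖ L j) * ρ * (K i ⊗ₖ L j)ᴴ)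
        ((1 : Matrix αA' αA' ℂ) ⊗ₖ ptraceA
          (∑ i : Fin rA, ∑ j : Fin rB, (K i ⊗ₖ L j) * ρ * (K i ⊗ₖ L j)ᴴ))) := by
    refine le_csInf hTne ?_
    rintro r' ⟨Q', hQ'1, hQ'2, hQ'3, rfl⟩
    have hQbpsd : (∑ i : Fin rA, ∑ j : Fin rB,
        (K i ⊗ₖ L j)ᴴ * Q' * (K i ⊗ₖ L j)).PosSemidef :=
      psd_sum _ _ fun i _ => psd_sum _ _ fun j _ => hQ'1.conjTranspose_mul_mul_same _
    have hQbsub : ((1 : Matrix (αA × αB) (αA × αB) ℂ) -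
        ∑ i : Fin rA, ∑ j : Fin rB, (K i ⊗ₖ L j)ᴴ * Q' * (K i ⊗ₖ L j)).PosSemidef := by
      have hone : (1 : Matrix (αA × αB) (αA × αB) ℂ) -
          (∑ i : Fin rA, ∑ j : Fin rB, (K i ⊗ₖ L j)ᴴ * Q' * (K i ⊗ₖ L j)) =
          ∑ i : Fin rA, ∑ j : Fin rB, (K i ⊗ₖ L j)ᴴ * (1 - Q') * (K i ⊗ₖ L j) := by
        simp only [Matrix.mul_sub, Matrix.sub_mul, Matrix.mul_one,
          Finset.sum_sub_distrib]
        rw [hsum1]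
      rw [hone]
      exact psd_sum _ _ fun i _ => psd_sum _ _ fun j _ =>
        hQ'2.conjTranspose_mul_mul_same _
    have hQbρ : ((∑ i : Fin rA, ∑ j : Fin rB,
        (K i ⊗ₖ L j)ᴴ * Q' * (K i ⊗ₖ L j)) * ρ).trace =
        (Q' * ∑ i : Fin rA, ∑ j : Fin rB, (K i ⊗ₖ L j) * ρ * (K i ⊗ₖ L j)ᴴ).trace := by
      rw [Finset.sum_mul, Matrix.trace_sum, Matrix.mul_sum, Matrix.trace_sum]
      refine Finset.sum_congr rfl fun i _ => ?_
      rw [Finset.sum_mul, Matrix.trace_sum, Matrix.mul_sum, Matrix.trace_sum]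
      exact Finset.sum_congr rfl fun j _ => trace_conj_cycle _ _ _
    have hQbσ : ((∑ i : Fin rA, ∑ j : Fin rB,
        (K i ⊗ₖ L j)ᴴ * Q' * (K i ⊗ₖ L j)) * ((1 : Matrix αA αA ℂ) ⊗ₖ ptraceA ρ)).trace =
        (Q' * ((∑ i : Fin rA, K i * (K i)ᴴ) ⊗ₖ
          (∑ j : Fin rB, L j * ptraceA ρ * (L j)ᴴ))).trace := by
      have hconj : ∀ (i : Fin rA) (j : Fin rB),
          (K i ⊗ₖ L j) * ((1 : Matrix αA αA ℂ) ⊗ₖ ptraceA ρ) * (K i ⊗ₖ L j)ᴴ =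
            (K i * (K i)ᴴ) ⊗ₖ (L j * ptraceA ρ * (L j)ᴴ) := by
        intro i j
        rw [kron_conjT, ← Matrix.mul_kronecker_mul, ← Matrix.mul_kronecker_mul,
          Matrix.mul_one]
      have hfact : (∑ i : Fin rA, K i * (K i)ᴴ) ⊗ₖ
          (∑ j : Fin rB, L j * ptraceA ρ * (L j)ᴴ) =
          ∑ i : Fin rA, ∑ j : Fin rB, (K i * (K i)ᴴ) ⊗ₖ (L j * ptraceA ρ * (L j)ᴴ) := by
        rw [sum_kron]
        exact Finset.sum_congr rfl fun i _ => kron_sum _ _ _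
      rw [hfact, Finset.sum_mul, Matrix.trace_sum, Matrix.mul_sum, Matrix.trace_sum]
      refine Finset.sum_congr rfl fun i _ => ?_
      rw [Finset.sum_mul, Matrix.trace_sum, Matrix.mul_sum, Matrix.trace_sum]
      refine Finset.sum_congr rfl fun j _ => ?_
      rw [trace_conj_cycle, hconj i j]
    have hW : (∑ j : Fin rB, L j * ptraceA ρ * (L j)ᴴ).PosSemidef :=
      psd_sum _ _ fun j _ => hρB.mul_mul_conjTranspose_same _
    have hval : (((∑ i : Fin rA, ∑ j : Fin rB,
        (K i ⊗ₖ L j)ᴴ * Q' * (K i ⊗ₖ L j)) * ((1 : Matrix αA αA ℂ) ⊗ₖ ptraceA ρ)).trace).re ≤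
        ((Q' * ((1 : Matrix αA' αA' ℂ) ⊗ₖ ptraceA
          (∑ i : Fin rA, ∑ j : Fin rB, (K i ⊗ₖ L j) * ρ * (K i ⊗ₖ L j)ᴴ))).trace).re := by
      rw [hQbσ, hτB]
      have hdiff : (Q' * ((1 : Matrix αA' αA' ℂ) ⊗ₖ
            (∑ j : Fin rB, L j * ptraceA ρ * (L j)ᴴ))).trace -
          (Q' * ((∑ i : Fin rA, K i * (K i)ᴴ) ⊗ₖ
            (∑ j : Fin rB, L j * ptraceA ρ * (L j)ᴴ))).trace =
          (Q' * (((1 : Matrix αA' αA' ℂ) - ∑ i : Fin rA, K i * (K i)ᴴ) ⊗ₖ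
            (∑ j : Fin rB, L j * ptraceA ρ * (L j)ᴴ))).trace := by
        rw [sub_kron, Matrix.mul_sub, Matrix.trace_sub]
      have hnn := trace_mul_psd_re_nonneg hQ'1 (kron_posSemidef hKsub hW)
      have := congrArg Complex.re hdiff
      rw [Complex.sub_re] at this
      linarith
    have hmem : (((∑ i : Fin rA, ∑ j : Fin rB,
        (K i ⊗ₖ L j)ᴴ * Q' * (K i ⊗ₖ L j)) *
          ((1 : Matrix αA αA ℂ) ⊗ₖ ptraceA ρ)).trace).re / ε ∈
        betaSet ε ρ ((1 : Matrix αA αA ℂ) ⊗ₖ ptraceA ρ) :=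
      ⟨_, hQbpsd, hQbsub, by rw [hQbρ]; exact hQ'3, rfl⟩
    calc sInf (betaSet ε ρ ((1 : Matrix αA αA ℂ) ⊗ₖ ptraceA ρ))
        ≤ (((∑ i : Fin rA, ∑ j : Fin rB, (K i ⊗ₖ L j)ᴴ * Q' * (K i ⊗ₖ L j)) *
            ((1 : Matrix αA αA ℂ) ⊗ₖ ptraceA ρ)).trace).re / ε := csInf_le hSbdd hmem
      _ ≤ ((Q' * ((1 : Matrix αA' αA' ℂ) ⊗ₖ ptraceA
            (∑ i : Fin rA, ∑ j : Fin rB, (K i ⊗ₖ L j) * ρ * (K i ⊗ₖ L j)ᴴ))).trace).re / ε := by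
          gcongr
  have hpos : 0 < sInf (betaSet ε ρ ((1 : Matrix αA αA ℂ) ⊗ₖ ptraceA ρ)) :=
    lt_of_lt_of_le (by positivity) (le_csInf hSne hSlb)
  exact Real.logb_le_logb_of_le one_lt_two hpos hle
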